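/- Let (X, dist) be a metric space, P ⊆ X a nonempty finite set of points, and k ≥ 1 an integer. Suppose S* ⊆ P is a nonempty subset with |S*| ≤ k such that every point p ∈ P satisfies dist(p, S*) ≤ R*, and suppose R* > 0. If S ⊆ P is a nonempty maximal distance-(2R*) independent set in P, then |S| ≤ k and every point p ∈ P satisfies dist(p, S) ≤ 2R*; that is, S is a feasible k-center solution whose cost is at most twice the optimal cost. -/

import Mathlib

/-- If a nonempty `S* ⊆ P` with `|S*| ≤ k` covers `P` within radius
`R* > 0`, then any nonempty maximal distance-`2R*` independent set `S` in `P` has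
`|S| ≤ k` and covers `P` within radius `2R*` (a `2`-approximate `k`-center solution). -/
theorem maximal_independent_two_approx
    {X : Type*} [MetricSpace X] (P : Finset X) (hP : P.Nonempty) (k : ℕ) (hk : 1 ≤ k)
    (Sstar : Finset X) (hSsub : Sstar ⊆ P) (hSne : Sstar.Nonempty)
    (hScard : Sstar.card ≤ k) (Rstar : ℝ) (hR : 0 < Rstar)
    (hcov : ∀ p ∈ P, Metric.infDist p (Sstar : Set X) ≤ Rstar)
    (S : Finset X) (hSsub' : S ⊆ P) (hSne' : S.Nonempty)
    (hind : ∀ x ∈ S, ∀ y ∈ S, x ≠ y → 2 * Rstar < dist x y)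
    (hmax : ∀ q ∈ P, q ∉ S → ∃ s ∈ S, dist q s ≤ 2 * Rstar) :
    S.card ≤ k ∧ ∀ p ∈ P, Metric.infDist p (S : Set X) ≤ 2 * Rstar := by
  classical
  have hcomp : IsCompact (Sstar : Set X) := Sstar.finite_toSet.isCompact
  have hne : (Sstar : Set X).Nonempty := by exact_mod_cast hSne
  -- for each s, choose a nearest center
  have hnear : ∀ s ∈ S, ∃ c ∈ Sstar, dist s c ≤ Rstar := by
    intro s hs
    obtain ⟨c, hc, hceq⟩ := hcomp.exists_infDist_eq_dist hne s
    exact ⟨c, hc, hceq ▸ hcov s (hSsub' hs)⟩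
  choose f hf hfd using hnear
  constructor
  · calc S.card ≤ Sstar.card := by
          apply Finset.card_le_card_of_injOn (fun s => if h : s ∈ S then f s h else s)
          · intro s hs; simp only [Finset.mem_coe] at hs; simp only [dif_pos hs]; exact hf s hs
          · intro x hx y hy hxy
            simp only [Finset.mem_coe] at hx hy
            simp only [dif_pos hx, dif_pos hy] at hxy
            by_contra hne'
            have := hind x hx y hy hne'
            have : dist x y ≤ dist x (f x hx) + dist (f y hy) y := by
              rw [hxy]; exact dist_triangle _ _ _
            have : dist x y ≤ 2 * Rstar := by
              have := hfd y hy
              rw [dist_comm (f y hy) y] at *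
              nlinarith [hfd x hx, hfd y hy]
            linarith [hind x hx y hy hne']
        _ ≤ k := hScard
  · intro p hp
    by_cases hpS : p ∈ S
    · have : Metric.infDist p (S : Set X) = 0 := by
        rw [Metric.infDist_zero_of_mem (by exact_mod_cast hpS)]
      rw [this]; positivity
    · obtain ⟨s, hs, hds⟩ := hmax p hp hpS
      calc Metric.infDist p (S : Set X) ≤ dist p s :=
            Metric.infDist_le_dist_of_mem (by exact_mod_cast hs)
        _ ≤ 2 * Rstar := hds
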